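/- arXiv:2004.09730 — 2 statements merged into one kernel-verified Lean document; each statement's English description precedes it below -/
import Mathlib

section
/- Let A ∈ ℝ^{m×m} be symmetric and negative definite on the subspace S = {d : Bd = 0, C_α d = 0} where B ∈ ℝ^{m₁×m}, C_α ∈ ℝ^{|α|×m}. Let A_k → A, B_k → B, C_k → C_α be sequences of matrices. Then for all sufficiently large k, A_k is negative definite on S_k = {d : B_k d = 0, C_k d = 0}. (Stability of conditional negative definiteness under perturbation of both the quadratic form and the defining subspace.) -/
open Matrix Filter

private lemma tendsto_mulVec' {n m : ℕ} {Mk : ℕ → Matrix (Fin n) (Fin m) ℝ}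
    {M : Matrix (Fin n) (Fin m) ℝ} {vk : ℕ → Fin m → ℝ} {v : Fin m → ℝ}
    (hM : Tendsto Mk atTop (nhds M)) (hv : Tendsto vk atTop (nhds v)) :
    Tendsto (fun k => (Mk k).mulVec (vk k)) atTop (nhds (M.mulVec v)) := by
  rw [tendsto_pi_nhds] at hv ⊢
  intro i
  simp only [Matrix.mulVec, dotProduct]
  refine tendsto_finset_sum _ fun j _ => Tendsto.mul ?_ (hv j)
  have := tendsto_pi_nhds.1 hM i
  rw [tendsto_pi_nhds] at this
  exact this j

private lemma tendsto_dot' {m : ℕ} {uk vk : ℕ → Fin m → ℝ} {u v : Fin m → ℝ}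
    (hu : Tendsto uk atTop (nhds u)) (hv : Tendsto vk atTop (nhds v)) :
    Tendsto (fun k => uk k ⬝ᵥ vk k) atTop (nhds (u ⬝ᵥ v)) := by
  rw [tendsto_pi_nhds] at hu hv
  simp only [dotProduct]
  exact tendsto_finset_sum _ fun j _ => (hu j).mul (hv j)

set_option maxHeartbeats 1000000 in
/-- stability of negative definiteness on a subspace: if `A` is negative
definite on `{d : Bd = 0, C_α d = 0}` and `A_k → A`, `B_k → B`, `C_k → C_α`, then for
all large `k`, `A_k` is negative definite on `{d : B_k d = 0, C_k d = 0}`. -/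
theorem conditional_negative_definiteness_stable {m m₁ a : ℕ}
    (A : Matrix (Fin m) (Fin m) ℝ) (B : Matrix (Fin m₁) (Fin m) ℝ)
    (C : Matrix (Fin a) (Fin m) ℝ)
    (hA : A.IsSymm)
    (Ak : ℕ → Matrix (Fin m) (Fin m) ℝ) (Bk : ℕ → Matrix (Fin m₁) (Fin m) ℝ)
    (Ck : ℕ → Matrix (Fin a) (Fin m) ℝ)
    (hAk : Tendsto Ak atTop (nhds A))
    (hBk : Tendsto Bk atTop (nhds B))
    (hCk : Tendsto Ck atTop (nhds C))
    (hneg : ∀ d : Fin m → ℝ, d ≠ 0 → B.mulVec d = 0 → C.mulVec d = 0 →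
      A.mulVec d ⬝ᵥ d < 0) :
    ∀ᶠ k in atTop, ∀ d : Fin m → ℝ, d ≠ 0 → (Bk k).mulVec d = 0 →
      (Ck k).mulVec d = 0 → (Ak k).mulVec d ⬝ᵥ d < 0 := by
  by_contra h
  rw [Filter.not_eventually] at h
  have h' : ∃ᶠ k in atTop, ∃ d : Fin m → ℝ, d ≠ 0 ∧ (Bk k).mulVec d = 0 ∧
      (Ck k).mulVec d = 0 ∧ 0 ≤ (Ak k).mulVec d ⬝ᵥ d := by
    refine h.mono fun k hk => ?_
    push_neg at hk
    obtain ⟨d, hd0, hB, hC, hq⟩ := hk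
    exact ⟨d, hd0, hB, hC, hq⟩
  obtain ⟨φ, hφ, hP⟩ := Filter.extraction_of_frequently_atTop h'
  choose d hd0 hBd hCd hq using hP
  set e : ℕ → Fin m → ℝ := fun n => (‖d n‖)⁻¹ • d n with he
  have hnorm : ∀ n, ‖e n‖ = 1 := by
    intro n
    rw [he]
    simp only [norm_smul, norm_inv, norm_norm]
    exact inv_mul_cancel₀ (norm_ne_zero_iff.mpr (hd0 n))
  have hBe : ∀ n, (Bk (φ n)).mulVec (e n) = 0 := by
    intro n; rw [he]; simp [Matrix.mulVec_smul, hBd n]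
  have hCe : ∀ n, (Ck (φ n)).mulVec (e n) = 0 := by
    intro n; rw [he]; simp [Matrix.mulVec_smul, hCd n]
  have hqe : ∀ n, 0 ≤ (Ak (φ n)).mulVec (e n) ⬝ᵥ (e n) := by
    intro n
    rw [he]
    simp only [Matrix.mulVec_smul, smul_dotProduct, dotProduct_smul, smul_eq_mul]
    have : (0:ℝ) ≤ (‖d n‖)⁻¹ := inv_nonneg.mpr (norm_nonneg _)
    exact mul_nonneg this (mul_nonneg this (hq n))
  have hesphere : ∀ n, e n ∈ Metric.sphere (0 : Fin m → ℝ) 1 := by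
    intro n; simpa [mem_sphere_iff_norm] using hnorm n
  obtain ⟨dl, hdl, ψ, hψ, hlim⟩ :=
    (isCompact_sphere (0 : Fin m → ℝ) 1).tendsto_subseq hesphere
  have hdne : dl ≠ 0 := by
    intro h0
    rw [h0] at hdl
    simp [mem_sphere_iff_norm] at hdl
  have hκ : Tendsto (fun n => φ (ψ n)) atTop atTop := (hφ.comp hψ).tendsto_atTop
  have hAκ : Tendsto (fun n => Ak (φ (ψ n))) atTop (nhds A) := hAk.comp hκ
  have hBκ : Tendsto (fun n => Bk (φ (ψ n))) atTop (nhds B) := hBk.comp hκ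
  have hCκ : Tendsto (fun n => Ck (φ (ψ n))) atTop (nhds C) := hCk.comp hκ
  have hlim' : Tendsto (fun n => e (ψ n)) atTop (nhds dl) := hlim
  have hBlim : Tendsto (fun n => (Bk (φ (ψ n))).mulVec (e (ψ n))) atTop
      (nhds (B.mulVec dl)) := tendsto_mulVec' hBκ hlim'
  have hClim : Tendsto (fun n => (Ck (φ (ψ n))).mulVec (e (ψ n))) atTop
      (nhds (C.mulVec dl)) := tendsto_mulVec' hCκ hlim'
  have hAlim : Tendsto (fun n => (Ak (φ (ψ n))).mulVec (e (ψ n)) ⬝ᵥ (e (ψ n))) atTop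
      (nhds (A.mulVec dl ⬝ᵥ dl)) := tendsto_dot' (tendsto_mulVec' hAκ hlim') hlim'
  have hB0 : B.mulVec dl = 0 :=
    tendsto_nhds_unique hBlim
      (tendsto_const_nhds.congr fun n => (hBe (ψ n)).symm)
  have hC0 : C.mulVec dl = 0 :=
    tendsto_nhds_unique hClim
      (tendsto_const_nhds.congr fun n => (hCe (ψ n)).symm)
  have hq0 : 0 ≤ A.mulVec dl ⬝ᵥ dl :=
    le_of_tendsto_of_tendsto tendsto_const_nhds hAlim (Eventually.of_forall fun n => hqe (ψ n))
  exact absurd (hneg dl hdne hB0 hC0) (not_lt.mpr hq0)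
end

section
/- Let K ⊆ ℝⁿ be a nonempty compact convex set with support function δ*(d|K) = max{vᵀd : v ∈ K}, and let T = {d : Bd = 0, Cd ≤ 0} for matrices B ∈ ℝ^{p×n}, C ∈ ℝ^{q×n}. Suppose δ*(d|K) ≥ 0 for all d ∈ T, and the Slater-type condition holds: the rows of B are linearly independent and there exists d̄ with Bd̄ = 0 and Cd̄ < 0 componentwise. Then there exist v ∈ K, u ∈ ℝᵖ and w ∈ ℝ^q with w ≥ 0 such that v + Bᵀu + Cᵀw = 0. -/
open Matrix Set Pointwise

lemma isClosed_coneSet {E : Type*} [NormedAddCommGroup E] [NormedSpace ℝ E]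
    [FiniteDimensional ℝ E] :
    ∀ (N : ℕ) (ι : Type) [Fintype ι], Fintype.card ι ≤ N → ∀ (c : ι → E),
      IsClosed {x : E | ∃ w : ι → ℝ, (∀ i, 0 ≤ w i) ∧ ∑ i, w i • c i = x} := by
  intro N
  induction N with
  | zero =>
    intro ι _ hcard c
    have hempty : IsEmpty ι := by rw [← Fintype.card_eq_zero_iff]; omega
    have hset : {x : E | ∃ w : ι → ℝ, (∀ i, 0 ≤ w i) ∧ ∑ i, w i • c i = x} = {0} := by
      ext x
      constructor
      · rintro ⟨w, -, hsum⟩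
        simp only [Set.mem_singleton_iff]
        rw [← hsum, Finset.univ_eq_empty, Finset.sum_empty]
      · rintro rfl
        exact ⟨fun _ => 0, fun i => le_refl 0, by
          rw [Finset.univ_eq_empty, Finset.sum_empty]⟩
    rw [hset]; exact isClosed_singleton
  | succ N ih =>
    intro ι _ hcard c
    classical
    by_cases hli : LinearIndependent ℝ c
    · let f : (ι → ℝ) →ₗ[ℝ] E := Fintype.linearCombination ℝ c
      have hker : LinearMap.ker f = ⊥ := by
        rw [LinearMap.ker_eq_bot']
        intro w hw
        have := Fintype.linearIndependent_iff.mp hli w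
          (by simpa [f, Fintype.linearCombination_apply] using hw)
        funext i; exact this i
      have hemb := LinearMap.isClosedEmbedding_of_injective hker
      have horth : IsClosed {w : ι → ℝ | ∀ i, 0 ≤ w i} := by
        have h2 : {w : ι → ℝ | ∀ i, 0 ≤ w i} = ⋂ i, {w | 0 ≤ w i} := by ext w; simp
        rw [h2]
        exact isClosed_iInter fun i => isClosed_le continuous_const (continuous_apply i)
      have hseteq : {x : E | ∃ w : ι → ℝ, (∀ i, 0 ≤ w i) ∧ ∑ i, w i • c i = x}
          = f '' {w : ι → ℝ | ∀ i, 0 ≤ w i} := by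
        ext x
        simp only [Set.mem_setOf_eq, Set.mem_image]
        constructor
        · rintro ⟨w, hw, hsum⟩
          exact ⟨w, hw, by simpa [f, Fintype.linearCombination_apply] using hsum⟩
        · rintro ⟨w, hw, hsum⟩
          exact ⟨w, hw, by simpa [f, Fintype.linearCombination_apply] using hsum⟩
      rw [hseteq]
      exact hemb.isClosedMap _ horth
    · rw [Fintype.not_linearIndependent_iff] at hli
      obtain ⟨a1, ha1, i1, hi1⟩ := hli
      obtain ⟨a, ha0, j0, hj0⟩ :
          ∃ a : ι → ℝ, ∑ i, a i • c i = 0 ∧ ∃ j, 0 < a j := by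
        rcases lt_trichotomy (a1 i1) 0 with h | h | h
        · exact ⟨-a1, by simp [ha1], i1, by simpa using h⟩
        · exact absurd h hi1
        · exact ⟨a1, ha1, i1, h⟩
      have key : {x : E | ∃ w : ι → ℝ, (∀ i, 0 ≤ w i) ∧ ∑ i, w i • c i = x} =
          ⋃ i0 : ι, {x : E | ∃ w : {j : ι // j ≠ i0} → ℝ, (∀ j, 0 ≤ w j) ∧
            ∑ j, w j • c j.1 = x} := by
        ext x
        simp only [Set.mem_setOf_eq, Set.mem_iUnion]
        constructor
        · rintro ⟨w, hw, hsum⟩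
          set s : Finset ι := Finset.univ.filter (fun i => 0 < a i) with hs
          have hsne : s.Nonempty := ⟨j0, by simp [hs, hj0]⟩
          obtain ⟨i0, hi0s, hi0⟩ := Finset.exists_mem_eq_inf' hsne (fun i => w i / a i)
          set t : ℝ := s.inf' hsne (fun i => w i / a i) with ht
          have hai0 : 0 < a i0 := by
            simp only [hs, Finset.mem_filter] at hi0s; exact hi0s.2
          have htnn : 0 ≤ t := by
            rw [ht]
            apply Finset.le_inf'
            intro i his
            have hai : 0 < a i := by
              simp only [hs, Finset.mem_filter] at his; exact his.2
            exact div_nonneg (hw i) hai.le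
          set w' : ι → ℝ := fun j => w j - t * a j with hw'
          have hw'nn : ∀ j, 0 ≤ w' j := by
            intro j
            by_cases hj : 0 < a j
            · have hle : t ≤ w j / a j := by
                rw [ht]; exact Finset.inf'_le _ (by simp [hs, hj])
              have := (le_div_iff₀ hj).mp hle
              simp only [hw']; linarith
            · push_neg at hj
              have : t * a j ≤ 0 := mul_nonpos_of_nonneg_of_nonpos htnn hj
              simp only [hw']; linarith [hw j]
          have hw'i0 : w' i0 = 0 := by
            show w i0 - t * a i0 = 0
            rw [hi0, div_mul_cancel₀ _ hai0.ne', sub_self]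
          refine ⟨i0, fun j => w' j.1, fun j => hw'nn j.1, ?_⟩
          have hsplit : ∑ j : {j : ι // j ≠ i0}, w' j.1 • c j.1
              = ∑ j ∈ Finset.univ.erase i0, w' j • c j := by
            rw [Finset.sum_subtype (p := fun j => j ≠ i0) (Finset.univ.erase i0)
              (fun j => by simp [Finset.mem_erase]) (fun j => w' j • c j)]
          rw [hsplit]
          have herase : ∑ j ∈ Finset.univ.erase i0, w' j • c j = ∑ j, w' j • c j := by
            rw [← Finset.add_sum_erase _ _ (Finset.mem_univ i0), hw'i0, zero_smul,
              zero_add]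
          rw [herase]
          have hdist : ∑ j, w' j • c j = ∑ j, w j • c j - t • ∑ j, a j • c j := by
            rw [Finset.smul_sum, ← Finset.sum_sub_distrib]
            congr 1; funext j
            simp [hw', sub_smul, smul_smul]
          rw [hdist, ha0, smul_zero, sub_zero, hsum]
        · rintro ⟨i0, w, hw, hsum⟩
          refine ⟨fun j => if h : j = i0 then 0 else w ⟨j, h⟩, fun j => ?_, ?_⟩
          · by_cases h : j = i0
            · simp [h]
            · simp only [dif_neg h]; exact hw _
          · rw [← Finset.add_sum_erase _ _ (Finset.mem_univ i0)]
            simp only [dif_pos rfl, zero_smul, zero_add]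
            rw [← hsum, Finset.sum_subtype (p := fun j => j ≠ i0) (Finset.univ.erase i0)
                (fun j => by simp [Finset.mem_erase])
                (fun j => (if h : j = i0 then 0 else w ⟨j, h⟩) • c j)]
            rw [dif_pos trivial, zero_smul, zero_add]
            exact Finset.sum_congr rfl fun j _ => by rw [dif_neg j.2]
      rw [key]
      apply isClosed_iUnion_of_finite
      intro i0
      have hcard' : Fintype.card {j : ι // j ≠ i0} ≤ N := by
        have h2 : Fintype.card {j : ι // j ≠ i0} < Fintype.card ι :=
          Fintype.card_subtype_lt (x := i0) (by simp)
        omega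
      exact ih _ hcard' _

lemma transpose_mulVec_eq_sum {m' n' : ℕ} (A : Matrix (Fin m') (Fin n') ℝ)
    (u : Fin m' → ℝ) : Aᵀ.mulVec u = ∑ j, u j • A j := by
  funext k
  simp [Matrix.mulVec, dotProduct, Matrix.transpose_apply, Finset.sum_apply,
    mul_comm]

lemma nonpos_of_forall_scale {c b z : ℝ} (h : ∀ t : ℝ, 0 ≤ t → c + t * z < b) :
    z ≤ 0 := by
  by_contra h'
  push_neg at h'
  have hb : c < b := by simpa using h 0 le_rfl
  have := h ((b - c) / z) (div_nonneg (by linarith) h'.le)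
  rw [div_mul_cancel₀ _ h'.ne'] at this
  linarith

/-- Let `K` be a nonempty compact convex set whose support function is
nonnegative on `T = {d : Bd = 0, Cd ≤ 0}`, and suppose the rows of `B` are linearly
independent and there is `d̄` with `Bd̄ = 0`, `Cd̄ < 0` (Slater). Then there are `v ∈ K`,
`u` and `w ≥ 0` with `v + Bᵀu + Cᵀw = 0`. -/
theorem support_function_duality {n p q : ℕ}
    (K : Set (Fin n → ℝ)) (hKne : K.Nonempty) (hKcp : IsCompact K)
    (hKcv : Convex ℝ K)
    (B : Matrix (Fin p) (Fin n) ℝ) (C : Matrix (Fin q) (Fin n) ℝ)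
    (hsupp : ∀ d : Fin n → ℝ, B.mulVec d = 0 → (∀ i, C.mulVec d i ≤ 0) →
      0 ≤ sSup ((fun v => v ⬝ᵥ d) '' K))
    (hB : LinearIndependent ℝ (fun j : Fin p => B j))
    (hSlater : ∃ dbar : Fin n → ℝ, B.mulVec dbar = 0 ∧ ∀ i, C.mulVec dbar i < 0) :
    ∃ v ∈ K, ∃ u : Fin p → ℝ, ∃ w : Fin q → ℝ,
      (∀ i, 0 ≤ w i) ∧ v + Bᵀ.mulVec u + Cᵀ.mulVec w = 0 := by
  classical
  -- the finitely generated cone F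
  set F : Set (Fin n → ℝ) := {x | ∃ u : Fin p → ℝ, ∃ w : Fin q → ℝ,
    (∀ i, 0 ≤ w i) ∧ Bᵀ.mulVec u + Cᵀ.mulVec w = x} with hF
  -- F as a coneSet
  set ι : Type := (Fin p ⊕ Fin p) ⊕ Fin q with hι
  set c : ι → (Fin n → ℝ) :=
    Sum.elim (Sum.elim (fun j => B j) (fun j => -B j)) (fun i => C i) with hc
  have hFcone : F = {x : Fin n → ℝ | ∃ W : ι → ℝ, (∀ i, 0 ≤ W i) ∧
      ∑ i, W i • c i = x} := by
    ext x
    constructor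
    · rintro ⟨u, w, hw, hx⟩
      refine ⟨Sum.elim (Sum.elim (fun j => max (u j) 0) (fun j => max (-(u j)) 0))
        (fun i => w i), ?_, ?_⟩
      · rintro ((j | j) | i) <;> simp [le_max_right, hw]
      · rw [Fintype.sum_sum_type, Fintype.sum_sum_type]
        simp only [Sum.elim_inl, Sum.elim_inr, hc]
        have h1 : ∑ j : Fin p, max (u j) 0 • B j + ∑ j : Fin p, max (-(u j)) 0 • (-B j)
            = ∑ j : Fin p, u j • B j := by
          rw [← Finset.sum_add_distrib]
          apply Finset.sum_congr rfl
          intro j _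
          rw [smul_neg, ← sub_eq_add_neg, ← sub_smul, max_zero_sub_max_neg_zero_eq_self]
        rw [h1, ← transpose_mulVec_eq_sum,
          (transpose_mulVec_eq_sum C w).symm, hx]
    · rintro ⟨W, hW, hx⟩
      refine ⟨fun j => W (Sum.inl (Sum.inl j)) - W (Sum.inl (Sum.inr j)),
        fun i => W (Sum.inr i), fun i => hW _, ?_⟩
      rw [transpose_mulVec_eq_sum, transpose_mulVec_eq_sum, ← hx,
        Fintype.sum_sum_type, Fintype.sum_sum_type]
      simp only [Sum.elim_inl, Sum.elim_inr, hc, smul_neg]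
      have e1 : ∑ j : Fin p,
          (W (Sum.inl (Sum.inl j)) - W (Sum.inl (Sum.inr j))) • B j
          = ∑ j : Fin p, W (Sum.inl (Sum.inl j)) • B j
            - ∑ j : Fin p, W (Sum.inl (Sum.inr j)) • B j := by
        rw [← Finset.sum_sub_distrib]
        exact Finset.sum_congr rfl fun j _ => sub_smul _ _ _
      rw [e1, Finset.sum_neg_distrib]
      abel
  have hFclosed : IsClosed F := by
    rw [hFcone]
    exact isClosed_coneSet (Fintype.card ι) ι le_rfl c
  have hFconv : Convex ℝ F := by
    rintro x ⟨u1, w1, hw1, hx1⟩ y ⟨u2, w2, hw2, hx2⟩ a b ha hb hab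
    refine ⟨a • u1 + b • u2, a • w1 + b • w2, fun i => by
      have := hw1 i; have := hw2 i
      simp only [Pi.add_apply, Pi.smul_apply, smul_eq_mul]
      positivity, ?_⟩
    rw [Matrix.mulVec_add, Matrix.mulVec_add, Matrix.mulVec_smul, Matrix.mulVec_smul,
      Matrix.mulVec_smul, Matrix.mulVec_smul, ← hx1, ← hx2]
    module
  have hF0 : (0 : Fin n → ℝ) ∈ F :=
    ⟨0, 0, fun i => le_refl 0, by simp [Matrix.mulVec_zero]⟩
  -- the closed convex set S = K + F
  have hSclosed : IsClosed (K + F) := hFclosed.add_left_of_isCompact hKcp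
  have hSconv : Convex ℝ (K + F) := hKcv.add hFconv
  by_cases h0 : (0 : Fin n → ℝ) ∈ K + F
  · rw [Set.mem_add] at h0
    obtain ⟨v, hv, y, ⟨u, w, hw, hy⟩, hvy⟩ := h0
    exact ⟨v, hv, u, w, hw, by rw [add_assoc, hy, hvy]⟩
  · exfalso
    obtain ⟨f, b, hfb, hb0⟩ := geometric_hahn_banach_closed_point hSconv hSclosed h0
    rw [map_zero] at hb0
    -- the separating vector d
    set d : Fin n → ℝ := fun i => f (Pi.single i 1) with hd
    have hfd : ∀ a : Fin n → ℝ, f a = a ⬝ᵥ d := by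
      intro a
      have ha : a = ∑ i, a i • (Pi.single i (1 : ℝ) : Fin n → ℝ) := by
        funext k
        simp [Finset.sum_apply, Pi.single_apply, mul_ite]
      conv_lhs => rw [ha]
      rw [map_sum]
      simp only [_root_.map_smul, smul_eq_mul]
      rfl
    -- members of S give bounds
    have hmemS : ∀ v ∈ K, ∀ y ∈ F, f (v + y) < b := by
      intro v hv y hy
      exact hfb _ (Set.add_mem_add hv hy)
    have hKne' := hKne
    obtain ⟨v0, hv0⟩ := hKne
    -- B.mulVec d = 0
    have hBd : B.mulVec d = 0 := by
      have key : ∀ u' : Fin p → ℝ, f (Bᵀ.mulVec u') ≤ 0 := by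
        intro u'
        apply nonpos_of_forall_scale (c := f v0) (b := b)
        intro t ht
        have hmem : Bᵀ.mulVec (t • u') ∈ F :=
          ⟨t • u', 0, fun i => le_refl 0, by simp [Matrix.mulVec_zero]⟩
        have := hmemS v0 hv0 _ hmem
        rwa [map_add, Matrix.mulVec_smul, _root_.map_smul, smul_eq_mul] at this
      have keyeq : ∀ u' : Fin p → ℝ, f (Bᵀ.mulVec u') = 0 := by
        intro u'
        have h1 := key u'
        have h2 := key (-u')
        rw [Matrix.mulVec_neg, map_neg] at h2
        linarith
      funext j
      have := keyeq (Pi.single j 1)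
      rw [hfd, Matrix.mulVec_transpose, ← Matrix.dotProduct_mulVec,
        single_dotProduct, one_mul] at this
      exact this
    -- C.mulVec d ≤ 0
    have hCd : ∀ i, C.mulVec d i ≤ 0 := by
      intro i
      have key : f (Cᵀ.mulVec (Pi.single i 1 : Fin q → ℝ)) ≤ 0 := by
        apply nonpos_of_forall_scale (c := f v0) (b := b)
        intro t ht
        have hmem : Cᵀ.mulVec (t • (Pi.single i 1 : Fin q → ℝ)) ∈ F :=
          ⟨0, t • (Pi.single i 1 : Fin q → ℝ), fun k => by
            simp only [Pi.smul_apply, smul_eq_mul]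
            by_cases hk : k = i <;> simp [Pi.single_apply, hk, ht], by
            simp [Matrix.mulVec_zero]⟩
        have := hmemS v0 hv0 _ hmem
        rwa [map_add, Matrix.mulVec_smul, _root_.map_smul, smul_eq_mul] at this
      rwa [hfd, Matrix.mulVec_transpose, ← Matrix.dotProduct_mulVec,
        single_dotProduct, one_mul] at key
    -- contradiction with the support function hypothesis
    have hsup := hsupp d hBd hCd
    have hbound : sSup ((fun v => v ⬝ᵥ d) '' K) ≤ b := by
      apply csSup_le (hKne'.image _)
      rintro x ⟨v, hv, rfl⟩
      have := hmemS v hv 0 hF0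
      rw [add_zero, hfd] at this
      exact this.le
    linarith
end
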